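/- Near-linearity of the top-count function: under the same hypotheses (anonymous, pairwise responsive, pairwise isolated, ε-strongly unanimous, m ≥ 3 candidates), for every candidate x, all j, j' ∈ {0,...,n−1}, and every ℓ ∈ [n] with j+ℓ ≤ n and j'+ℓ ≤ n, we have |(v'(x,j+ℓ) − v'(x,j)) − (v'(x,j'+ℓ) − v'(x,j'))| ≤ 64mε, where v'(x,j) is the selection probability of x on the canonical profile with exactly j voters ranking x first. -/

import Mathlib

open Finset

variable {C : Type*}

/-- A preference ordering on `C`: a ranking of the candidates, where a higher
rank means more preferred. -/
abbrev Pref (C : Type*) [Fintype C] := C ≃ Fin (Fintype.card C)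

/-- `x` is strictly preferred to `y` in `P`. -/
def PrefOver [Fintype C] (P : Pref C) (x y : C) : Prop := P y < P x

/-- The top (most preferred) candidate of `P`. -/
def topC [Fintype C] [Nonempty C] (P : Pref C) : C :=
  P.symm ⟨Fintype.card C - 1, Nat.sub_lt Fintype.card_pos Nat.one_pos⟩

/-- `x` is directly above `y` in `P`. -/
def DirAbove [Fintype C] (P : Pref C) (x y : C) : Prop := (P x : ℕ) = (P y : ℕ) + 1

/-- The ordering `P` with candidates `x` and `y` swapped. -/
def swapIn [Fintype C] [DecidableEq C] (P : Pref C) (x y : C) : Pref C :=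
  (Equiv.swap x y).trans P

/-- A (randomized) voting rule: nonnegative selection probabilities summing to 1. -/
def IsVotingRule [Fintype C] {n : ℕ} (v : (Fin n → Pref C) → C → ℝ) : Prop :=
  (∀ Pvec x, 0 ≤ v Pvec x) ∧ (∀ Pvec, ∑ x, v Pvec x = 1)

def Anonymous [Fintype C] {n : ℕ} (v : (Fin n → Pref C) → C → ℝ) : Prop :=
  ∀ (σ : Equiv.Perm (Fin n)) (Pvec : Fin n → Pref C) (x : C), v (Pvec ∘ σ) x = v Pvec x

/-- Expected utility of a distribution `d` over candidates under utility `u`. -/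
def EU [Fintype C] (u : C → ℝ) (d : C → ℝ) : ℝ := ∑ x, u x * d x

/-- A `[0,1]`-valued utility function consistent with the ordering `P`. -/
def Consistent [Fintype C] (u : C → ℝ) (P : Pref C) : Prop :=
  (∀ x, u x ∈ Set.Icc (0 : ℝ) 1) ∧ ∀ x y, u x > u y ↔ PrefOver P x y

/-- The random dictatorship voting rule. -/
noncomputable def vdict [Fintype C] [Nonempty C] [DecidableEq C] {n : ℕ}
    (Pvec : Fin n → Pref C) (x : C) : ℝ :=
  ((Finset.univ.filter (fun i => topC (Pvec i) = x)).card : ℝ) / n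

def StrategyProofRule [Fintype C] {n : ℕ} (v : (Fin n → Pref C) → C → ℝ) : Prop :=
  ∀ (i : Fin n) (Pvec : Fin n → Pref C) (P' : Pref C) (u : C → ℝ),
    Consistent u (Pvec i) → EU u (v (Function.update Pvec i P')) ≤ EU u (v Pvec)

def IsBelief [Fintype C] [DecidableEq C] (φ : Pref C → ℝ) : Prop :=
  (∀ P, 0 ≤ φ P) ∧ ∑ P, φ P = 1

/-- The profile where voter `i` submits `Pi` and the other voters submit `Q`. -/
def profileWith [Fintype C] {n : ℕ} (i : Fin n) (Q : {j : Fin n // j ≠ i} → Pref C)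
    (Pi : Pref C) : Fin n → Pref C :=
  fun j => if h : j = i then Pi else Q ⟨j, h⟩

/-- Expected utility for voter `i` reporting `Pi` when the others' orderings are
i.i.d. with distribution `φ`. -/
noncomputable def beliefEU [Fintype C] [DecidableEq C] {n : ℕ}
    (v : (Fin n → Pref C) → C → ℝ) (i : Fin n) (φ : Pref C → ℝ) (u : C → ℝ)
    (Pi : Pref C) : ℝ :=
  ∑ Q : {j : Fin n // j ≠ i} → Pref C, (∏ j, φ (Q j)) * EU u (v (profileWith i Q Pi))

/-- Strategy-proofness with respect to a single i.i.d. belief `φ`. -/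
def SPwrtBelief [Fintype C] [DecidableEq C] {n : ℕ}
    (v : (Fin n → Pref C) → C → ℝ) (φ : Pref C → ℝ) : Prop :=
  ∀ (i : Fin n) (Pi Pi' : Pref C) (u : C → ℝ),
    Consistent u Pi → beliefEU v i φ u Pi' ≤ beliefEU v i φ u Pi

/-- Weak strategy-proofness: strategy-proofness w.r.t. all i.i.d. beliefs. -/
def WeaklySP [Fintype C] [DecidableEq C] {n : ℕ}
    (v : (Fin n → Pref C) → C → ℝ) : Prop :=
  ∀ φ : Pref C → ℝ, IsBelief φ → SPwrtBelief v φ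

def ParetoEff [Fintype C] {n : ℕ} (ε : ℝ) (v : (Fin n → Pref C) → C → ℝ) : Prop :=
  ∀ (x y : C) (Pvec : Fin n → Pref C), (∀ i, PrefOver (Pvec i) x y) → v Pvec y ≤ ε

def StrongUnanimity [Fintype C] [Nonempty C] {n : ℕ} (ε : ℝ)
    (v : (Fin n → Pref C) → C → ℝ) : Prop :=
  ∀ (x : C) (Pvec : Fin n → Pref C), (∀ i, topC (Pvec i) = x) → 1 - ε ≤ v Pvec x

def WeakUnanimity [Fintype C] [Nonempty C] {n : ℕ} (ε : ℝ)
    (v : (Fin n → Pref C) → C → ℝ) : Prop :=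
  ∀ P : Pref C, 1 - ε ≤ v (fun _ => P) (topC P)

def SuperWeakUnanimity [Fintype C] [Nonempty C] {n : ℕ} (ε : ℝ)
    (v : (Fin n → Pref C) → C → ℝ) : Prop :=
  ∀ x : C, ∃ Pvec : Fin n → Pref C, (∀ i, topC (Pvec i) = x) ∧ 1 - ε ≤ v Pvec x

def PairwiseResponsive [Fintype C] [DecidableEq C] {n : ℕ}
    (v : (Fin n → Pref C) → C → ℝ) : Prop :=
  ∀ (Pvec : Fin n → Pref C) (i : Fin n) (x y z : C),
    DirAbove (Pvec i) x y → z ≠ x → z ≠ y →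
      v (Function.update Pvec i (swapIn (Pvec i) x y)) z = v Pvec z

def PairwiseIsolated [Fintype C] [DecidableEq C] {n : ℕ}
    (v : (Fin n → Pref C) → C → ℝ) : Prop :=
  ∀ (i : Fin n) (Pvec Pvec' : Fin n → Pref C) (x y : C),
    DirAbove (Pvec i) x y → Pvec' i = Pvec i →
    (∀ j, j ≠ i → (PrefOver (Pvec j) x y ↔ PrefOver (Pvec' j) x y)) →
    v (Function.update Pvec' i (swapIn (Pvec' i) x y)) y - v Pvec' y =
      v (Function.update Pvec i (swapIn (Pvec i) x y)) y - v Pvec y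

/-- The ordering `e` with candidate `x` moved to the top (relative order of the
other candidates preserved). -/
def moveToTop [Fintype C] [DecidableEq C] (e : Pref C) (x : C) : Pref C :=
  e.trans ((Fin.revPerm.trans (Fin.cycleRange (e x).rev)).trans Fin.revPerm)

/-- The ordering `e` with candidate `x` moved to the bottom (relative order of
the other candidates preserved). -/
def moveToBot [Fintype C] [DecidableEq C] (e : Pref C) (x : C) : Pref C :=
  e.trans (Fin.cycleRange (e x))

/-- The canonical profile `P⃗^{x,j}`: the first `j` voters rank `x` on top and
the remaining voters rank `x` on the bottom, with the other candidates ordered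
according to the fixed ordering `e`. -/
def canonProfile [Fintype C] [DecidableEq C] {n : ℕ} (e : Pref C) (x : C) (j : ℕ) :
    Fin n → Pref C :=
  fun i => if (i : ℕ) < j then moveToTop e x else moveToBot e x

/-- `v'(x,j)`: the selection probability of `x` on the canonical profile with
exactly `j` voters ranking `x` first. -/
def vTopCount [Fintype C] [DecidableEq C] {n : ℕ} (v : (Fin n → Pref C) → C → ℝ)
    (e : Pref C) (x : C) (j : ℕ) : ℝ :=
  v (canonProfile e x j) x

set_option linter.unusedSectionVars false
set_option maxHeartbeats 1000000

section MoveGen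

lemma cycleRange_val {n : ℕ} (i j : Fin n) :
    ((Fin.cycleRange i j : Fin n) : ℕ) =
      if j < i then (j : ℕ) + 1 else if j = i then 0 else (j : ℕ) := by
  cases n with
  | zero => exact i.elim0
  | succ k =>
    rw [Fin.cycleRange_apply]
    split_ifs with h1 h2
    · have : j < Fin.last k := lt_of_lt_of_le h1 (Fin.le_last i)
      rw [Fin.val_add_one_of_lt this]
    · simp
    · rfl

end MoveGen

section Basics
variable [Fintype C] [Nonempty C] [DecidableEq C]

lemma prefOver_irrefl (P : Pref C) (x : C) : ¬ PrefOver P x x := lt_irrefl _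

lemma prefOver_asymm {P : Pref C} {x y : C} (h : PrefOver P x y) : ¬ PrefOver P y x :=
  lt_asymm h

lemma prefOver_total {P : Pref C} {x y : C} (hxy : x ≠ y) :
    PrefOver P x y ∨ PrefOver P y x := by
  rcases lt_or_gt_of_ne (fun h : P x = P y => hxy (P.injective h)) with h | h
  · exact Or.inr h
  · exact Or.inl h

lemma not_prefOver_iff {P : Pref C} {x y : C} (hxy : x ≠ y) :
    ¬ PrefOver P x y ↔ PrefOver P y x := by
  constructor
  · intro h; rcases prefOver_total hxy with h' | h' <;> tauto
  · exact prefOver_asymm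

lemma prefOver_ne {P : Pref C} {x y : C} (h : PrefOver P x y) : x ≠ y := by
  rintro rfl; exact prefOver_irrefl P x h

lemma dirAbove_prefOver {P : Pref C} {x y : C} (h : DirAbove P x y) : PrefOver P x y := by
  have h' : (P x : ℕ) = (P y : ℕ) + 1 := h
  show P y < P x
  rw [Fin.lt_def]
  omega

lemma dirAbove_ne {P : Pref C} {x y : C} (h : DirAbove P x y) : x ≠ y :=
  prefOver_ne (dirAbove_prefOver h)

@[simp] lemma swapIn_apply_left (P : Pref C) (x y : C) : swapIn P x y x = P y := by
  simp [swapIn]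

@[simp] lemma swapIn_apply_right (P : Pref C) (x y : C) : swapIn P x y y = P x := by
  simp [swapIn]

lemma swapIn_apply_other (P : Pref C) {x y c : C} (hx : c ≠ x) (hy : c ≠ y) :
    swapIn P x y c = P c := by
  simp [swapIn, Equiv.swap_apply_of_ne_of_ne hx hy]

lemma topC_rank (P : Pref C) : (P (topC P) : ℕ) = Fintype.card C - 1 := by
  simp [topC]

lemma rank_lt_card (P : Pref C) (c : C) : (P c : ℕ) < Fintype.card C := (P c).isLt

lemma topC_eq_iff {P : Pref C} {c : C} :
    topC P = c ↔ (P c : ℕ) = Fintype.card C - 1 := by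
  constructor
  · rintro rfl; exact topC_rank P
  · intro h
    have : P (topC P) = P c := by
      apply Fin.ext
      rw [topC_rank P, h]
    exact (P.injective this)

lemma rank_lt_topC {P : Pref C} {c : C} (h : c ≠ topC P) :
    (P c : ℕ) < Fintype.card C - 1 := by
  have hne : (P c : ℕ) ≠ Fintype.card C - 1 := fun hc => h (topC_eq_iff.mpr hc).symm
  have := rank_lt_card P c
  omega

lemma prefOver_topC {P : Pref C} {c : C} (h : c ≠ topC P) : PrefOver P (topC P) c := by
  have h1 := rank_lt_topC h
  have h2 := topC_rank P
  show (P c : ℕ) < _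
  omega

lemma topC_swapIn {P : Pref C} {a b : C} (ha : topC P ≠ a) (hb : topC P ≠ b) :
    topC (swapIn P a b) = topC P := by
  rw [topC_eq_iff, swapIn_apply_other P ha hb]
  exact topC_rank P

lemma topC_of_rank_last {P : Pref C} {c : C} (h : (P c : ℕ) = Fintype.card C - 1) :
    topC P = c := topC_eq_iff.mpr h

end Basics

instance [Fintype C] (P : Pref C) (x y : C) : Decidable (PrefOver P x y) :=
  inferInstanceAs (Decidable (P y < P x))

section L4
variable [Fintype C] [DecidableEq C]

lemma dirAbove_ne' {Q : Pref C} {a b : C} (hab : DirAbove Q a b) : a ≠ b := by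
  have h' : (Q a : ℕ) = (Q b : ℕ) + 1 := hab
  intro hh
  rw [hh] at h'
  omega

/-- rank as cardinality of dominated set -/
lemma rank_card (Q : Pref C) (c : C) :
    (Q c : ℕ) = (univ.filter (fun d => PrefOver Q c d)).card := by
  classical
  have himg : (univ.filter (fun d => PrefOver Q c d)).image Q = Finset.Iio (Q c) := by
    ext k
    simp only [mem_image, mem_filter, mem_univ, true_and, Finset.mem_Iio]
    constructor
    · rintro ⟨d, hd, rfl⟩; exact hd
    · intro hk; exact ⟨Q.symm k, by simpa [PrefOver] using hk, by simp⟩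
  have := congrArg Finset.card himg
  rw [Finset.card_image_of_injective _ Q.injective, Fin.card_Iio] at this
  omega

/-- two orders with the same comparisons are equal -/
lemma eq_of_prefOver_iff {Q Q' : Pref C}
    (h : ∀ a b, PrefOver Q a b ↔ PrefOver Q' a b) : Q = Q' := by
  apply Equiv.ext
  intro c
  apply Fin.ext
  rw [rank_card Q c, rank_card Q' c]
  have : (univ.filter (fun d => PrefOver Q c d)) = (univ.filter (fun d => PrefOver Q' c d)) := by
    apply Finset.filter_congr
    intro d _
    simpa using h c d
  rw [this]

/-- disagreement count -/
noncomputable def disN (Q Q' : Pref C) : ℕ :=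
  ((univ : Finset (C × C)).filter
    (fun p : C × C => PrefOver Q p.1 p.2 ∧ PrefOver Q' p.2 p.1)).card

lemma exists_adjacent_disagreement {Q Q' : Pref C} (h : Q ≠ Q') :
    ∃ a b, DirAbove Q a b ∧ PrefOver Q' b a := by
  classical
  by_contra hcon
  push_neg at hcon
  apply h
  apply eq_of_prefOver_iff
  have hadj : ∀ a b, DirAbove Q a b → PrefOver Q' a b := by
    intro a b hab
    have hne : a ≠ b := dirAbove_ne' hab
    rcases (lt_or_gt_of_ne (fun hh : Q' a = Q' b => hne (Q'.injective hh))) with h1 | h1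
    · exact absurd h1 (hcon a b hab)
    · exact h1
  have key : ∀ d : ℕ, ∀ a b : C, (Q a : ℕ) = (Q b : ℕ) + d + 1 → PrefOver Q' a b := by
    intro d
    induction d with
    | zero => intro a b hab; exact hadj a b hab
    | succ k ih =>
      intro a b hab
      have hblt : (Q b : ℕ) + k + 1 < Fintype.card C := by
        have := (Q a).isLt; omega
      set c := Q.symm ⟨(Q b : ℕ) + k + 1, hblt⟩ with hc
      have hQc : (Q c : ℕ) = (Q b : ℕ) + k + 1 := by simp [hc]
      have h1 : PrefOver Q' a c := hadj a c (by show (Q a : ℕ) = _; omega)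
      have h2 : PrefOver Q' c b := ih c b (by omega)
      exact lt_trans h2 h1
  intro a b
  constructor
  · intro hab
    have : (Q b : ℕ) < (Q a : ℕ) := hab
    obtain ⟨d, hd⟩ : ∃ d, (Q a : ℕ) = (Q b : ℕ) + d + 1 := ⟨(Q a : ℕ) - (Q b : ℕ) - 1, by omega⟩
    exact key d a b hd
  · intro hab
    by_contra hno
    have hne : a ≠ b := fun hh => by subst hh; exact absurd hab (lt_irrefl _)
    have hba : PrefOver Q b a := by
      rcases lt_or_gt_of_ne (fun hh : Q a = Q b => hne (Q.injective hh)) with h1 | h1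
      · exact h1
      · exact absurd h1 hno
    obtain ⟨d, hd⟩ : ∃ d, (Q b : ℕ) = (Q a : ℕ) + d + 1 :=
      ⟨(Q b : ℕ) - (Q a : ℕ) - 1, by have : (Q a : ℕ) < (Q b : ℕ) := hba; omega⟩
    exact absurd hab (lt_asymm (key d b a hd))

lemma swapIn_rank_left (Q : Pref C) (a b : C) : ((swapIn Q a b) a : ℕ) = (Q b : ℕ) := by
  simp [swapIn]

lemma swapIn_rank_right (Q : Pref C) (a b : C) : ((swapIn Q a b) b : ℕ) = (Q a : ℕ) := by
  simp [swapIn]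

lemma swapIn_rank_other (Q : Pref C) {a b c : C} (h1 : c ≠ a) (h2 : c ≠ b) :
    ((swapIn Q a b) c : ℕ) = (Q c : ℕ) := by
  simp [swapIn, Equiv.swap_apply_of_ne_of_ne h1 h2]

lemma prefOver_swapIn_iff {Q : Pref C} {a b : C} (hab : DirAbove Q a b) (c d : C)
    (hc : (c, d) ≠ (a, b)) (hd : (c, d) ≠ (b, a)) :
    (PrefOver (swapIn Q a b) c d ↔ PrefOver Q c d) := by
  have hQab : (Q a : ℕ) = (Q b : ℕ) + 1 := hab
  have hane : a ≠ b := dirAbove_ne' hab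
  have hinj : ∀ u w : C, u ≠ w → (Q u : ℕ) ≠ (Q w : ℕ) :=
    fun u w hu hh => hu (Q.injective (Fin.ext hh))
  show (swapIn Q a b) d < (swapIn Q a b) c ↔ Q d < Q c
  rw [Fin.lt_def, Fin.lt_def]
  by_cases hca : c = a
  · by_cases hdb : d = b
    · exact absurd (by rw [hca, hdb]) hc
    · by_cases hda : d = a
      · rw [hca, hda, swapIn_rank_left]
        omega
      · rw [hca, swapIn_rank_left, swapIn_rank_other Q hda hdb]
        have := hinj d a hda
        have := hinj d b hdb
        omega
  · by_cases hcb : c = b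
    · by_cases hda : d = a
      · exact absurd (by rw [hcb, hda]) hd
      · by_cases hdb : d = b
        · rw [hcb, hdb, swapIn_rank_right]
          omega
        · rw [hcb, swapIn_rank_right, swapIn_rank_other Q hda hdb]
          have := hinj d a hda
          have := hinj d b hdb
          omega
    · rw [swapIn_rank_other Q hca hcb]
      by_cases hda : d = a
      · rw [hda, swapIn_rank_left]
        have := hinj c a hca
        have := hinj c b hcb
        omega
      · by_cases hdb : d = b
        · rw [hdb, swapIn_rank_right]
          have := hinj c a hca
          have := hinj c b hcb
          omega
        · rw [swapIn_rank_other Q hda hdb]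

lemma not_prefOver_swapIn {Q : Pref C} {a b : C} (hab : DirAbove Q a b) :
    ¬ PrefOver (swapIn Q a b) a b := by
  have hQab : (Q a : ℕ) = (Q b : ℕ) + 1 := hab
  show ¬ (swapIn Q a b) b < (swapIn Q a b) a
  rw [Fin.lt_def, swapIn_rank_left, swapIn_rank_right]
  omega

lemma disN_lt {Q Q' : Pref C} {a b : C} (hab : DirAbove Q a b) (hdis : PrefOver Q' b a) :
    disN (swapIn Q a b) Q' < disN Q Q' := by
  classical
  apply Finset.card_lt_card
  constructor
  · intro p hp
    simp only [mem_filter, mem_univ, true_and] at hp ⊢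
    rcases eq_or_ne p (a, b) with rfl | h1
    · exact absurd hp.1 (not_prefOver_swapIn hab)
    · rcases eq_or_ne p (b, a) with rfl | h2
      · exact absurd hp.2 (lt_asymm hdis)
      · refine ⟨?_, hp.2⟩
        refine (prefOver_swapIn_iff hab p.1 p.2 ?_ ?_).mp hp.1
        · intro hh; exact h1 (by rw [← hh])
        · intro hh; exact h2 (by rw [← hh])
  · intro hsub
    have hmem : (a, b) ∈ (univ : Finset (C × C)).filter
        (fun p : C × C => PrefOver Q p.1 p.2 ∧ PrefOver Q' p.2 p.1) := by
      simp only [mem_filter, mem_univ, true_and]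
      exact ⟨by
        show Q b < Q a
        rw [Fin.lt_def]
        have : (Q a : ℕ) = (Q b : ℕ) + 1 := hab
        omega, hdis⟩
    have := hsub hmem
    simp only [mem_filter, mem_univ, true_and] at this
    exact absurd this.1 (not_prefOver_swapIn hab)

end L4

lemma exists_perm_filter {n : ℕ} (A B : Finset (Fin n)) (h : A.card = B.card) :
    ∃ σ : Equiv.Perm (Fin n), ∀ j, σ j ∈ A ↔ j ∈ B := by
  classical
  have e₁ : {x // x ∈ B} ≃ {x // x ∈ A} := Finset.equivOfCardEq h.symm
  have hcompl : Fintype.card {x : Fin n // ¬ x ∈ B} = Fintype.card {x : Fin n // ¬ x ∈ A} := by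
    rw [Fintype.card_subtype_compl, Fintype.card_subtype_compl]
    congr 1
    rw [Fintype.card_coe, Fintype.card_coe, h]
  have e₂ : {x : Fin n // ¬ x ∈ B} ≃ {x : Fin n // ¬ x ∈ A} := Fintype.equivOfCardEq hcompl
  refine ⟨(Equiv.sumCompl (· ∈ B)).symm.trans ((e₁.sumCongr e₂).trans
    (Equiv.sumCompl (· ∈ A))), ?_⟩
  intro j
  by_cases hj : j ∈ B
  · have hsymm : (Equiv.sumCompl (· ∈ B)).symm j = Sum.inl ⟨j, hj⟩ := by
      rw [Equiv.symm_apply_eq, Equiv.sumCompl_apply_inl]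
    simp only [Equiv.trans_apply, hsymm, Equiv.sumCongr_apply, Sum.map_inl,
      Equiv.sumCompl_apply_inl]
    exact iff_of_true (e₁ ⟨j, hj⟩).2 hj
  · have hsymm : (Equiv.sumCompl (· ∈ B)).symm j = Sum.inr ⟨j, hj⟩ := by
      rw [Equiv.symm_apply_eq, Equiv.sumCompl_apply_inr]
    simp only [Equiv.trans_apply, hsymm, Equiv.sumCongr_apply, Sum.map_inr,
      Equiv.sumCompl_apply_inr]
    exact iff_of_false (e₂ ⟨j, hj⟩).2 hj

-- PLACEHOLDER_MOVEFACTS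
section MoveFacts
variable [Fintype C] [Nonempty C] [DecidableEq C]

lemma moveToTop_apply (e : Pref C) (x c : C) :
    moveToTop e x c = ((e x).rev.cycleRange (e c).rev).rev := rfl

lemma moveToTop_self_rank (e : Pref C) (x : C) :
    ((moveToTop e x) x : ℕ) = Fintype.card C - 1 := by
  rw [moveToTop_apply, Fin.val_rev, cycleRange_val]
  simp

lemma moveToBot_self_rank (e : Pref C) (x : C) :
    ((moveToBot e x) x : ℕ) = 0 := by
  show ((Fin.cycleRange (e x)) (e x) : ℕ) = 0
  rw [cycleRange_val]
  simp

-- the previous top of e goes to second place when x ≠ top moves to top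
lemma moveToTop_prev_top_rank (e : Pref C) {x c : C} (hc : (e c : ℕ) = Fintype.card C - 1)
    (hxc : x ≠ c) : ((moveToTop e x) c : ℕ) = Fintype.card C - 2 := by
  have hm : 0 < Fintype.card C := Fintype.card_pos
  have hx : (e x : ℕ) < Fintype.card C := (e x).isLt
  have hxc' : (e x : ℕ) ≠ (e c : ℕ) := fun h => hxc (e.injective (Fin.ext h))
  have hxlt : (e x : ℕ) < Fintype.card C - 1 := by omega
  rw [moveToTop_apply, Fin.val_rev, cycleRange_val]
  have h1 : ((e c).rev : ℕ) = 0 := by rw [Fin.val_rev]; omega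
  have h2 : ((e x).rev : ℕ) = Fintype.card C - 1 - (e x : ℕ) := by rw [Fin.val_rev]; omega
  have hlt : (e c).rev < (e x).rev := by rw [Fin.lt_def]; omega
  rw [if_pos hlt, h1]

end MoveFacts

-- PLACEHOLDER_VOTING
section Voting
variable [Fintype C] [Nonempty C] [DecidableEq C] {n : ℕ}
  {v : (Fin n → Pref C) → C → ℝ} {ε : ℝ}

lemma v_nonneg (hv : IsVotingRule v) (P : Fin n → Pref C) (c : C) : 0 ≤ v P c := hv.1 P c

lemma v_le_one (hv : IsVotingRule v) (P : Fin n → Pref C) (c : C) : v P c ≤ 1 := by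
  have h := hv.2 P
  calc v P c ≤ ∑ x, v P x := Finset.single_le_sum (fun x _ => hv.1 P x) (mem_univ c)
  _ = 1 := h

lemma eps_nonneg (hv : IsVotingRule v) (hsu : StrongUnanimity ε v) : 0 ≤ ε := by
  classical
  obtain ⟨x⟩ := (inferInstance : Nonempty C)
  set e : Pref C := Fintype.equivFin C
  have h := hsu x (fun _ => moveToTop e x) (fun _ => topC_of_rank_last (moveToTop_self_rank e x))
  have := v_le_one hv (fun _ => moveToTop e x) x
  linarith

lemma v_le_eps_of_unanimous (hv : IsVotingRule v) (hsu : StrongUnanimity ε v)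
    {P : Fin n → Pref C} {w : C} (htop : ∀ i, topC (P i) = w) {c : C} (hc : c ≠ w) :
    v P c ≤ ε := by
  classical
  have h1 := hsu w P htop
  have hsum := hv.2 P
  have hpair : v P c + v P w ≤ 1 := by
    have : ∑ u ∈ ({c, w} : Finset C), v P u ≤ ∑ u, v P u :=
      Finset.sum_le_sum_of_subset_of_nonneg (Finset.subset_univ _)
        (fun u _ _ => hv.1 P u)
    rwa [Finset.sum_pair hc, hsum] at this
  linarith

/-- changing one voter's ordering without changing the pairwise comparisons
against `y` does not change `y`'s probability -/
lemma v_free_change (hpr : PairwiseResponsive v) {y : C} :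
    ∀ (Q Q' : Pref C), (∀ c, PrefOver Q c y ↔ PrefOver Q' c y) →
      ∀ (P : Fin n → Pref C) (i : Fin n),
        v (Function.update P i Q') y = v (Function.update P i Q) y := by
  classical
  suffices H : ∀ (N : ℕ) (Q Q' : Pref C), disN Q Q' ≤ N →
      (∀ c, PrefOver Q c y ↔ PrefOver Q' c y) →
      ∀ (P : Fin n → Pref C) (i : Fin n),
        v (Function.update P i Q') y = v (Function.update P i Q) y by
    exact fun Q Q' h P i => H (disN Q Q') Q Q' le_rfl h P i
  intro N
  induction N with
  | zero =>
    intro Q Q' hN hy P i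
    -- disN = 0 forces Q = Q'
    have hQQ : Q = Q' := by
      apply eq_of_prefOver_iff
      intro a b
      have hnone : ∀ a b, ¬ (PrefOver Q a b ∧ PrefOver Q' b a) := by
        intro a b hcon
        have hmem : (a, b) ∈ ((univ : Finset (C × C)).filter
            (fun p : C × C => PrefOver Q p.1 p.2 ∧ PrefOver Q' p.2 p.1)) := by
          simp only [mem_filter, mem_univ, true_and]; exact hcon
        have : 0 < disN Q Q' := Finset.card_pos.mpr ⟨(a, b), hmem⟩
        omega
      constructor
      · intro hab
        have hne : a ≠ b := prefOver_ne hab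
        rcases prefOver_total (P := Q') hne with h1 | h1
        · exact h1
        · exact absurd ⟨hab, h1⟩ (hnone a b)
      · intro hab
        have hne : a ≠ b := prefOver_ne hab
        rcases prefOver_total (P := Q) hne with h1 | h1
        · exact h1
        · exact absurd ⟨h1, hab⟩ (hnone b a)
    rw [hQQ]
  | succ k ih =>
    intro Q Q' hN hy P i
    rcases eq_or_ne Q Q' with rfl | hne
    · rfl
    obtain ⟨a, b, hab, hdis⟩ := exists_adjacent_disagreement hne
    have hay : a ≠ y := by
      intro h
      rw [h] at hab hdis
      exact prefOver_asymm (dirAbove_prefOver hab) ((hy b).mpr hdis)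
    have hby : b ≠ y := by
      intro h
      rw [h] at hab hdis
      exact prefOver_asymm hdis ((hy a).mp (dirAbove_prefOver hab))
    have hstep : v (Function.update P i (swapIn Q a b)) y = v (Function.update P i Q) y := by
      have h := hpr (Function.update P i Q) i a b y
        (by rw [Function.update_self]; exact hab) (Ne.symm hay) (Ne.symm hby)
      rwa [Function.update_self, Function.update_idem] at h
    have hylt : ∀ c, PrefOver (swapIn Q a b) c y ↔ PrefOver Q' c y := by
      intro c
      rw [← hy c]
      apply prefOver_swapIn_iff hab
      · intro hh
        injection hh with hh1 hh2
        exact hby hh2.symm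
      · intro hh
        injection hh with hh1 hh2
        exact hay hh2.symm
    have hdec : disN (swapIn Q a b) Q' ≤ k := by
      have := disN_lt hab hdis
      omega
    rw [← hstep]
    exact ih (swapIn Q a b) Q' hdec hylt P i

/-- profiles that agree pointwise on comparisons against `y` give `y` the same
probability -/
lemma v_eq_of_pointwise (hpr : PairwiseResponsive v) {y : C} :
    ∀ (P P' : Fin n → Pref C),
      (∀ i c, PrefOver (P i) c y ↔ PrefOver (P' i) c y) → v P y = v P' y := by
  classical
  suffices H : ∀ (k : ℕ) (P P' : Fin n → Pref C),
      (univ.filter (fun i => P i ≠ P' i)).card ≤ k →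
      (∀ i c, PrefOver (P i) c y ↔ PrefOver (P' i) c y) → v P y = v P' y by
    exact fun P P' h => H _ P P' le_rfl h
  intro k
  induction k with
  | zero =>
    intro P P' hcard hpt
    have hemp : (univ.filter (fun i => P i ≠ P' i)) = ∅ := Finset.card_eq_zero.mp (by omega)
    have hPP : P = P' := by
      funext i
      by_contra hne
      have hmem : i ∈ univ.filter (fun i => P i ≠ P' i) := by
        simp only [mem_filter, mem_univ, true_and]; exact hne
      rw [hemp] at hmem
      exact absurd hmem (Finset.notMem_empty i)
    rw [hPP]
  | succ k ih =>
    intro P P' hcard hpt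
    rcases eq_or_ne P P' with rfl | hne
    · rfl
    have hnonempty : ∃ i, P i ≠ P' i := by
      by_contra hcon
      push_neg at hcon
      exact hne (funext hcon)
    obtain ⟨i, hi⟩ := hnonempty
    set P₁ := Function.update P i (P' i) with hP₁
    have h1 : v P y = v P₁ y := by
      have := v_free_change hpr (P i) (P' i) (fun c => hpt i c) P i
      rw [Function.update_eq_self] at this
      rw [hP₁]
      exact this.symm
    have h2 : v P₁ y = v P' y := by
      apply ih
      · have hsub : (univ.filter (fun j => P₁ j ≠ P' j)) ⊂
            (univ.filter (fun j => P j ≠ P' j)) := by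
          constructor
          · intro j hj
            simp only [mem_filter, mem_univ, true_and] at hj ⊢
            rcases eq_or_ne j i with rfl | hji
            · rw [hP₁, Function.update_self] at hj
              exact absurd rfl hj
            · rwa [hP₁, Function.update_of_ne hji] at hj
          · intro hsub2
            have hmem : i ∈ univ.filter (fun j => P j ≠ P' j) := by
              simp only [mem_filter, mem_univ, true_and]; exact hi
            have := hsub2 hmem
            simp only [mem_filter, mem_univ, true_and, hP₁, Function.update_self] at this
            exact this rfl
        have := Finset.card_lt_card hsub
        omega
      · intro j c
        rcases eq_or_ne j i with rfl | hji
        · rw [hP₁, Function.update_self]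
        · rw [hP₁, Function.update_of_ne hji]
          exact hpt j c
    rw [h1, h2]

lemma not_prefOver_of_top {Q : Pref C} {y c : C} (htop : topC Q = y) :
    ¬ PrefOver Q c y := by
  intro h
  have h1 : (Q y : ℕ) = Fintype.card C - 1 := by
    rw [← htop]; exact topC_rank Q
  have h2 := rank_lt_card Q c
  have h3 : (Q y : ℕ) < (Q c : ℕ) := h
  omega

lemma topC_ne_of_bottom {Q : Pref C} {y : C} (hm : 2 ≤ Fintype.card C)
    (hb : ∀ c, c ≠ y → PrefOver Q c y) : topC Q ≠ y := by
  intro htop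
  obtain ⟨c, hc⟩ := Fintype.exists_ne_of_one_lt_card (by omega) y
  exact not_prefOver_of_top htop (hb c hc)

end Voting

section Voting2
variable [Fintype C] [Nonempty C] [DecidableEq C] {n : ℕ}
  {v : (Fin n → Pref C) → C → ℝ} {ε : ℝ}

lemma moveToTop_topC (e : Pref C) (y : C) : topC (moveToTop e y) = y :=
  topC_of_rank_last (moveToTop_self_rank e y)

lemma moveToBot_bottom (e : Pref C) (y : C) : ∀ c, c ≠ y → PrefOver (moveToBot e y) c y := by
  intro c hc
  show moveToBot e y y < moveToBot e y c
  rw [Fin.lt_def, moveToBot_self_rank]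
  have : ((moveToBot e y) c : ℕ) ≠ 0 := by
    intro h0
    exact hc ((moveToBot e y).injective (Fin.ext (by rw [h0, moveToBot_self_rank])))
  omega

lemma moveToBot_topC_ne (hm : 2 ≤ Fintype.card C) (e : Pref C) (y : C) :
    topC (moveToBot e y) ≠ y := by
  intro h
  have h1 : ((moveToBot e y) y : ℕ) = Fintype.card C - 1 := topC_eq_iff.mp h
  rw [moveToBot_self_rank] at h1
  omega

lemma card_filter_Ico {lo hi : ℕ} (hhi : hi ≤ n) :
    ((univ : Finset (Fin n)).filter fun i : Fin n => lo ≤ (i : ℕ) ∧ (i : ℕ) < hi).card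
      = hi - lo := by
  classical
  have himg : (((univ : Finset (Fin n)).filter fun i : Fin n => lo ≤ (i : ℕ) ∧ (i : ℕ) < hi).image
      Fin.val) = Finset.Ico lo hi := by
    ext k
    simp only [mem_image, mem_filter, mem_univ, true_and, Finset.mem_Ico]
    constructor
    · rintro ⟨i, hi, rfl⟩; exact hi
    · intro hk
      exact ⟨⟨k, lt_of_lt_of_le hk.2 hhi⟩, hk, rfl⟩
  have := congrArg Finset.card himg
  rwa [Finset.card_image_of_injective _ Fin.val_injective, Nat.card_Ico] at this

/-- invariance of `y`'s probability for profiles where every voter puts `y` at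
the top or at the bottom, with equal counts -/
lemma v_eq_of_top_or_bottom (han : Anonymous v) (hpr : PairwiseResponsive v)
    {y : C} (P P' : Fin n → Pref C)
    (hP : ∀ i, topC (P i) = y ∨ ∀ c, c ≠ y → PrefOver (P i) c y)
    (hP' : ∀ i, topC (P' i) = y ∨ ∀ c, c ≠ y → PrefOver (P' i) c y)
    (hcard : (univ.filter fun i => topC (P i) = y).card =
             (univ.filter fun i => topC (P' i) = y).card) :
    v P y = v P' y := by
  classical
  obtain ⟨σ, hσ⟩ := exists_perm_filter (univ.filter fun i => topC (P i) = y)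
      (univ.filter fun i => topC (P' i) = y) hcard
  rw [← han σ P y]
  apply v_eq_of_pointwise hpr
  intro i c
  have hiff : topC (P (σ i)) = y ↔ topC (P' i) = y := by
    have := hσ i
    simpa only [mem_filter, mem_univ, true_and] using this
  by_cases htop : topC (P' i) = y
  · have h1 : topC (P (σ i)) = y := hiff.mpr htop
    exact iff_of_false (not_prefOver_of_top h1) (not_prefOver_of_top htop)
  · have h1 : topC (P (σ i)) ≠ y := fun hh => htop (hiff.mp hh)
    have hbot := (hP (σ i)).resolve_left h1
    have hbot' := (hP' i).resolve_left htop
    rcases eq_or_ne c y with rfl | hc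
    · exact iff_of_false (prefOver_irrefl _ _) (prefOver_irrefl _ _)
    · exact iff_of_true (hbot c hc) (hbot' c hc)

/-- comparison with the canonical profile -/
lemma v_canon_eq (han : Anonymous v) (hpr : PairwiseResponsive v)
    (hm : 2 ≤ Fintype.card C) {y : C} (P : Fin n → Pref C)
    (hP : ∀ i, topC (P i) = y ∨ ∀ c, c ≠ y → PrefOver (P i) c y)
    {b : ℕ} (hb : b ≤ n)
    (hcard : (univ.filter fun i => topC (P i) = y).card = b) (e : Pref C) :
    v P y = vTopCount v e y b := by
  classical
  unfold vTopCount
  apply v_eq_of_top_or_bottom han hpr P _ hP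
  · intro i
    simp only [canonProfile]
    by_cases hi : (i : ℕ) < b
    · rw [if_pos hi]; exact Or.inl (moveToTop_topC e y)
    · rw [if_neg hi]; exact Or.inr (moveToBot_bottom e y)
  · rw [hcard]
    have hfeq : (univ.filter fun i : Fin n => topC (canonProfile e y b i) = y) =
        (univ.filter fun i : Fin n => 0 ≤ (i : ℕ) ∧ (i : ℕ) < b) := by
      apply Finset.filter_congr
      intro i _
      simp only [canonProfile]
      by_cases hi : (i : ℕ) < b
      · rw [if_pos hi]
        exact iff_of_true (moveToTop_topC e y) ⟨Nat.zero_le _, hi⟩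
      · rw [if_neg hi]
        exact iff_of_false (moveToBot_topC_ne hm e y) (fun hh => hi hh.2)
    rw [hfeq, card_filter_Ico hb]
    omega

/-- a batch of voters with a common ordering swapping an adjacent pair `a,b`
does not change the probability of other candidates -/
lemma batch_resp (hpr : PairwiseResponsive v) {a b : C} {Q : Pref C} (hab : DirAbove Q a b) :
    ∀ (S : Finset (Fin n)) (P : Fin n → Pref C), (∀ i ∈ S, P i = Q) →
      ∀ c, c ≠ a → c ≠ b →
      v (fun i => if i ∈ S then swapIn Q a b else P i) c = v P c := by
  classical
  intro S
  induction S using Finset.induction_on with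
  | empty =>
    intro P hP c hca hcb
    simp
  | @insert i S' hiS' ih =>
    intro P hP c hca hcb
    have heq : (fun j => if j ∈ insert i S' then swapIn Q a b else P j)
        = (fun j => if j ∈ S' then swapIn Q a b
            else (Function.update P i (swapIn Q a b)) j) := by
      funext j
      by_cases hj : j = i
      · subst hj
        simp [hiS']
      · by_cases hj2 : j ∈ S' <;> simp [hj, hj2, Function.update_of_ne hj]
    rw [heq]
    have hupd : ∀ j ∈ S', (Function.update P i (swapIn Q a b)) j = Q := by
      intro j hj
      rw [Function.update_of_ne (by rintro rfl; exact hiS' hj)]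
      exact hP j (mem_insert_of_mem hj)
    rw [ih (Function.update P i (swapIn Q a b)) hupd c hca hcb]
    have h := hpr P i a b c
      (by rw [hP i (mem_insert_self i S')]; exact hab) hca hcb
    rw [hP i (mem_insert_self i S')] at h
    exact h

lemma pair_sum_invariant (hv : IsVotingRule v) {P P' : Fin n → Pref C} {a b : C}
    (hne : a ≠ b) (hother : ∀ c, c ≠ a → c ≠ b → v P' c = v P c) :
    v P' a + v P' b = v P a + v P b := by
  classical
  have h1 := hv.2 P
  have h2 := hv.2 P'
  have hsplit : ∀ (g : C → ℝ), ∑ c, g c = ∑ c ∈ (univ : Finset C) \ {a, b}, g c + (g a + g b) := by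
    intro g
    rw [← Finset.sum_sdiff (Finset.subset_univ ({a, b} : Finset C)), Finset.sum_pair hne]
  rw [hsplit] at h1 h2
  have h3 : ∑ c ∈ (univ : Finset C) \ {a, b}, v P' c = ∑ c ∈ (univ : Finset C) \ {a, b}, v P c := by
    apply Finset.sum_congr rfl
    intro c hc
    simp only [mem_sdiff, mem_univ, mem_insert, mem_singleton, true_and] at hc
    push_neg at hc
    exact hother c hc.1 hc.2
  linarith

/-- the key batch-swap bound: when a batch of voters sharing the ordering `Q`
swaps an adjacent pair `a,b`, both of which are not `Q`'s top, the probability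
of `b` changes by at most `ε` -/
lemma batch_swap_bound (hm : 3 ≤ Fintype.card C) (hv : IsVotingRule v)
    (hpr : PairwiseResponsive v) (hpi : PairwiseIsolated v) (hsu : StrongUnanimity ε v)
    {a b : C} {Q : Pref C} (hab : DirAbove Q a b)
    (hwa : topC Q ≠ a) (hwb : topC Q ≠ b)
    (S : Finset (Fin n)) (P : Fin n → Pref C) (hP : ∀ i ∈ S, P i = Q) :
    |v (fun i => if i ∈ S then swapIn Q a b else P i) b - v P b| ≤ ε := by
  classical
  have hane : a ≠ b := dirAbove_ne' hab
  set w := topC Q with hwdef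
  set e0 : Pref C := Fintype.equivFin C with he0
  set Wp := moveToTop (moveToTop (moveToTop e0 b) a) w with hWp
  set Wm := moveToTop (moveToTop (moveToTop e0 a) b) w with hWm
  have hWp_top : topC Wp = w := moveToTop_topC _ w
  have hWm_top : topC Wm = w := moveToTop_topC _ w
  have hm2 : (2:ℕ) ≤ Fintype.card C := by omega
  have hWp_ab : PrefOver Wp a b := by
    have h1 : (Wp a : ℕ) = Fintype.card C - 2 := by
      rw [hWp]
      exact moveToTop_prev_top_rank _ (moveToTop_self_rank _ a) hwa
    have hb1 : (Wp b : ℕ) < Fintype.card C - 1 := by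
      apply rank_lt_topC
      rw [hWp_top]
      exact Ne.symm hwb
    have hb2 : (Wp b : ℕ) ≠ (Wp a : ℕ) := by
      intro hh
      exact hane (Wp.injective (Fin.ext hh)).symm
    show Wp b < Wp a
    rw [Fin.lt_def]
    omega
  have hWm_ba : PrefOver Wm b a := by
    have h1 : (Wm b : ℕ) = Fintype.card C - 2 := by
      rw [hWm]
      exact moveToTop_prev_top_rank _ (moveToTop_self_rank _ b) hwb
    have hb1 : (Wm a : ℕ) < Fintype.card C - 1 := by
      apply rank_lt_topC
      rw [hWm_top]
      exact Ne.symm hwa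
    have hb2 : (Wm a : ℕ) ≠ (Wm b : ℕ) := by
      intro hh
      exact hane (Wm.injective (Fin.ext hh))
    show Wm a < Wm b
    rw [Fin.lt_def]
    omega
  have hWm_nab : ¬ PrefOver Wm a b := prefOver_asymm hWm_ba
  set synP : Fin n → Pref C :=
    fun i => if i ∈ S then Q else if PrefOver (P i) a b then Wp else Wm with hsynP
  have hsynP_mem : ∀ j, j ∈ S → synP j = Q := by
    intro j hj; rw [hsynP]; simp [hj]
  have hsynP_nmem : ∀ j, j ∉ S → synP j = if PrefOver (P j) a b then Wp else Wm := by
    intro j hj; rw [hsynP]; simp [hj]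
  have key : ∀ T : Finset (Fin n), T ⊆ S →
      v (fun i => if i ∈ T then swapIn Q a b else P i) b - v P b
        = v (fun i => if i ∈ T then swapIn Q a b else synP i) b - v synP b := by
    intro T
    induction T using Finset.induction_on with
    | empty =>
      intro _
      simp
    | @insert i T' hiT' ih =>
      intro hsub
      have hT'S : T' ⊆ S := fun j hj => hsub (mem_insert_of_mem hj)
      have hiS : i ∈ S := hsub (mem_insert_self i T')
      have hPTi' : (fun j => if j ∈ T' then swapIn Q a b else P j) i = P i := by
        simp [hiT']
      have hPi : P i = Q := hP i hiS
      have hsynTi : (fun j => if j ∈ T' then swapIn Q a b else synP j) i = Q := by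
        simp [hiT', hsynP_mem i hiS]
      have hiso := hpi i (fun j => if j ∈ T' then swapIn Q a b else P j)
          (fun j => if j ∈ T' then swapIn Q a b else synP j) a b
          (by rw [if_neg hiT', hPi]; exact hab)
          (by rw [if_neg hiT', if_neg hiT', hsynP_mem i hiS, hPi])
          ?_
      · rw [if_neg hiT', if_neg hiT', hsynP_mem i hiS, hPi] at hiso
        have hupd1 : Function.update (fun j => if j ∈ T' then swapIn Q a b else P j) i
            (swapIn Q a b) = (fun j => if j ∈ insert i T' then swapIn Q a b else P j) := by
          funext j
          rcases eq_or_ne j i with rfl | hji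
          · rw [Function.update_self, if_pos (mem_insert_self j T')]
          · rw [Function.update_of_ne hji]
            by_cases hjT : j ∈ T'
            · rw [if_pos hjT, if_pos (mem_insert_of_mem hjT)]
            · rw [if_neg hjT, if_neg (by simp [hji, hjT])]
        have hupd2 : Function.update (fun j => if j ∈ T' then swapIn Q a b else synP j) i
            (swapIn Q a b) = (fun j => if j ∈ insert i T' then swapIn Q a b else synP j) := by
          funext j
          rcases eq_or_ne j i with rfl | hji
          · rw [Function.update_self, if_pos (mem_insert_self j T')]
          · rw [Function.update_of_ne hji]
            by_cases hjT : j ∈ T'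
            · rw [if_pos hjT, if_pos (mem_insert_of_mem hjT)]
            · rw [if_neg hjT, if_neg (by simp [hji, hjT])]
        rw [hupd1, hupd2] at hiso
        have hih := ih hT'S
        linarith
      · intro j hji
        by_cases hjT : j ∈ T'
        · simp only [if_pos hjT]
        · simp only [if_neg hjT]
          by_cases hjS : j ∈ S
          · rw [hsynP_mem j hjS, hP j hjS]
          · rw [hsynP_nmem j hjS]
            by_cases hpref : PrefOver (P j) a b
            · rw [if_pos hpref]
              exact iff_of_true hpref hWp_ab
            · rw [if_neg hpref]
              exact iff_of_false hpref hWm_nab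
  have hkey := key S (Finset.Subset.refl S)
  have htops1 : ∀ i, topC (synP i) = w := by
    intro i
    by_cases hiS : i ∈ S
    · rw [hsynP_mem i hiS]
    · rw [hsynP_nmem i hiS]
      by_cases hpref : PrefOver (P i) a b
      · rw [if_pos hpref]; exact hWp_top
      · rw [if_neg hpref]; exact hWm_top
  have htops2 : ∀ i, topC ((fun i => if i ∈ S then swapIn Q a b else synP i) i) = w := by
    intro i
    by_cases hiS : i ∈ S
    · simp only [if_pos hiS]
      rw [topC_swapIn hwa hwb]
    · simp only [if_neg hiS]
      exact htops1 i
  have hwb' : b ≠ w := Ne.symm hwb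
  have h1 : v synP b ≤ ε := v_le_eps_of_unanimous hv hsu htops1 hwb'
  have h2 : v (fun i => if i ∈ S then swapIn Q a b else synP i) b ≤ ε :=
    v_le_eps_of_unanimous hv hsu htops2 hwb'
  have h3 : 0 ≤ v synP b := hv.1 _ b
  have h4 : 0 ≤ v (fun i => if i ∈ S then swapIn Q a b else synP i) b := hv.1 _ b
  rw [hkey, abs_le]
  constructor <;> linarith

end Voting2

section Voting3
variable [Fintype C] [Nonempty C] [DecidableEq C] {n : ℕ}
  {v : (Fin n → Pref C) → C → ℝ} {ε : ℝ}

/-- descending a candidate `y` to the bottom for a batch of voters sharing a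
common ordering changes `y`'s probability by at most `rank(y) * ε` -/
lemma descend_to_bottom (hm : 3 ≤ Fintype.card C) (hv : IsVotingRule v)
    (hpr : PairwiseResponsive v) (hpi : PairwiseIsolated v) (hsu : StrongUnanimity ε v)
    {y : C} :
    ∀ (k : ℕ) (Q : Pref C) (S : Finset (Fin n)) (P : Fin n → Pref C),
      (∀ i ∈ S, P i = Q) → topC Q ≠ y → (Q y : ℕ) = k →
      ∃ P', (∀ i, i ∉ S → P' i = P i) ∧
        (∀ i ∈ S, ∀ c, c ≠ y → PrefOver (P' i) c y) ∧
        |v P' y - v P y| ≤ (k : ℝ) * ε := by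
  intro k
  induction k with
  | zero =>
    intro Q S P hP htop hk
    refine ⟨P, fun i _ => rfl, ?_, by simp⟩
    intro i hi c hc
    rw [hP i hi]
    show Q y < Q c
    rw [Fin.lt_def]
    have hne : (Q c : ℕ) ≠ 0 := by
      intro h0
      exact hc (Q.injective (Fin.ext (by rw [h0, hk])))
    omega
  | succ k ih =>
    intro Q S P hP htop hk
    have hblt : k < Fintype.card C := by
      have := (Q y).isLt
      omega
    set b := Q.symm ⟨k, hblt⟩ with hbdef
    have hQb : (Q b : ℕ) = k := by rw [hbdef]; simp
    have hab : DirAbove Q y b := by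
      show (Q y : ℕ) = (Q b : ℕ) + 1
      omega
    have hby : b ≠ y := Ne.symm (dirAbove_ne' hab)
    have htopb : topC Q ≠ b := by
      intro hh
      have h1 : (Q b : ℕ) = Fintype.card C - 1 := topC_eq_iff.mp hh
      have h2 := rank_lt_card Q y
      omega
    have hb_bound := batch_swap_bound hm hv hpr hpi hsu hab htop htopb S P hP
    have hothers := fun c hca hcb => batch_resp hpr hab S P hP c hca hcb
    have hpair := pair_sum_invariant hv (dirAbove_ne' hab) hothers
    set P₁ := fun i => if i ∈ S then swapIn Q y b else P i with hP₁
    have hy_bound : |v P₁ y - v P y| ≤ ε := by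
      have heq : v P₁ y - v P y = -(v P₁ b - v P b) := by
        have := hpair
        linarith
      rw [heq, abs_neg]
      simpa only [← hP₁] using hb_bound
    have hP₁S : ∀ i ∈ S, P₁ i = swapIn Q y b := by
      intro i hi
      rw [hP₁]
      simp [hi]
    have htop' : topC (swapIn Q y b) ≠ y := by
      rw [topC_swapIn htop htopb]
      exact htop
    have hrank' : ((swapIn Q y b) y : ℕ) = k := by
      rw [swapIn_rank_left]
      exact hQb
    obtain ⟨P', hout, hbot, hbnd⟩ := ih (swapIn Q y b) S P₁ hP₁S htop' hrank'
    refine ⟨P', ?_, hbot, ?_⟩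
    · intro i hi
      rw [hout i hi, hP₁]
      simp [hi]
    · have htri : |v P' y - v P y| ≤ |v P' y - v P₁ y| + |v P₁ y - v P y| :=
        abs_sub_le _ _ _
      have : ((k : ℝ) + 1) * ε = (k : ℝ) * ε + ε := by ring
      push_cast
      rw [this]
      exact le_trans htri (by linarith)


/-- two-batch descent and comparison with the canonical profile -/
lemma twostep_estimate (hm : 3 ≤ Fintype.card C) (hv : IsVotingRule v)
    (han : Anonymous v) (hpr : PairwiseResponsive v) (hpi : PairwiseIsolated v)
    (hsu : StrongUnanimity ε v) (hε : 0 ≤ ε) (e : Pref C) {y : C}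
    (P : Fin n → Pref C) (Q2 Q3 : Pref C) (S2 S3 : Finset (Fin n))
    (hdisj : ∀ i, i ∈ S2 → i ∉ S3)
    (hP2 : ∀ i ∈ S2, P i = Q2) (hP3 : ∀ i ∈ S3, P i = Q3)
    (ht2 : topC Q2 ≠ y) (ht3 : topC Q3 ≠ y)
    (htops : ∀ i, i ∉ S2 → i ∉ S3 → topC (P i) = y)
    {b : ℕ} (hb : b ≤ n)
    (hcard : (univ.filter fun i => i ∉ S2 ∧ i ∉ S3).card = b) :
    |v P y - vTopCount v e y b| ≤ 2 * (Fintype.card C : ℝ) * ε := by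
  classical
  have hm2 : (2 : ℕ) ≤ Fintype.card C := by omega
  obtain ⟨P1, hout1, hbot1, hbnd1⟩ :=
    descend_to_bottom hm hv hpr hpi hsu (Q2 y : ℕ) Q2 S2 P hP2 ht2 rfl
  have hP13 : ∀ i ∈ S3, P1 i = Q3 := by
    intro i hi
    have hni : i ∉ S2 := fun hh => hdisj i hh hi
    rw [hout1 i hni]
    exact hP3 i hi
  obtain ⟨P2, hout2, hbot2, hbnd2⟩ :=
    descend_to_bottom hm hv hpr hpi hsu (Q3 y : ℕ) Q3 S3 P1 hP13 ht3 rfl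
  have hcanon : v P2 y = vTopCount v e y b := by
    apply v_canon_eq han hpr hm2 P2 _ hb _ e
    · intro i
      by_cases h2 : i ∈ S2
      · right
        have hni : i ∉ S3 := hdisj i h2
        intro c hc
        rw [hout2 i hni]
        exact hbot1 i h2 c hc
      · by_cases h3 : i ∈ S3
        · right
          exact hbot2 i h3
        · left
          rw [hout2 i h3, hout1 i h2]
          exact htops i h2 h3
    · rw [← hcard]
      congr 1
      apply Finset.filter_congr
      intro i _
      by_cases h2 : i ∈ S2
      · have hni : i ∉ S3 := hdisj i h2
        have hbot : ∀ c, c ≠ y → PrefOver (P2 i) c y := by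
          intro c hc
          rw [hout2 i hni]
          exact hbot1 i h2 c hc
        exact iff_of_false (topC_ne_of_bottom hm2 hbot) (fun hh => hh.1 h2)
      · by_cases h3 : i ∈ S3
        · exact iff_of_false (topC_ne_of_bottom hm2 (hbot2 i h3)) (fun hh => hh.2 h3)
        · refine iff_of_true ?_ ⟨h2, h3⟩
          rw [hout2 i h3, hout1 i h2]
          exact htops i h2 h3
  have hrank2 : ((Q2 y : ℕ) : ℝ) ≤ (Fintype.card C : ℝ) := by
    exact_mod_cast le_of_lt (rank_lt_card Q2 y)
  have hrank3 : ((Q3 y : ℕ) : ℝ) ≤ (Fintype.card C : ℝ) := by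
    exact_mod_cast le_of_lt (rank_lt_card Q3 y)
  have h1 : |v P1 y - v P y| ≤ (Fintype.card C : ℝ) * ε :=
    le_trans hbnd1 (mul_le_mul_of_nonneg_right hrank2 hε)
  have h2 : |v P2 y - v P1 y| ≤ (Fintype.card C : ℝ) * ε :=
    le_trans hbnd2 (mul_le_mul_of_nonneg_right hrank3 hε)
  rw [← hcanon]
  have htri : |v P y - v P2 y| ≤ |v P y - v P1 y| + |v P1 y - v P2 y| := abs_sub_le _ _ _
  rw [abs_sub_comm (v P y) (v P1 y), abs_sub_comm (v P1 y) (v P2 y)] at htri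
  calc |v P y - v P2 y| ≤ _ + _ := htri
  _ ≤ (Fintype.card C : ℝ) * ε + (Fintype.card C : ℝ) * ε := add_le_add h1 h2
  _ = 2 * (Fintype.card C : ℝ) * ε := by ring

/-- the key three-candidate identity -/
lemma clubsuit (hm : 3 ≤ Fintype.card C) (hv : IsVotingRule v) (han : Anonymous v)
    (hpr : PairwiseResponsive v) (hpi : PairwiseIsolated v) (hsu : StrongUnanimity ε v)
    (hε : 0 ≤ ε) (e : Pref C) {x y z : C}
    (hxy : x ≠ y) (hxz : x ≠ z) (hyz : y ≠ z) (a b : ℕ) (hab : a + b ≤ n) :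
    |vTopCount v e x a + vTopCount v e y b + vTopCount v e z (n - a - b) - 1| ≤
      7 * (Fintype.card C : ℝ) * ε := by
  classical
  have hm2 : (2 : ℕ) ≤ Fintype.card C := by omega
  set m := Fintype.card C with hmdef
  -- the three orderings
  set Oy : Pref C := moveToTop e y with hOy
  set Ox : Pref C := moveToTop Oy x with hOx
  set Oz : Pref C := moveToTop Oy z with hOz
  have htopOy : topC Oy = y := moveToTop_topC e y
  have htopOx : topC Ox = x := moveToTop_topC Oy x
  have htopOz : topC Oz = z := moveToTop_topC Oy z
  have hOxx : (Ox x : ℕ) = m - 1 := moveToTop_self_rank Oy x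
  have hOzz : (Oz z : ℕ) = m - 1 := moveToTop_self_rank Oy z
  have hOxy : (Ox y : ℕ) = m - 2 :=
    moveToTop_prev_top_rank Oy (moveToTop_self_rank e y) hxy
  have hOzy : (Oz y : ℕ) = m - 2 :=
    moveToTop_prev_top_rank Oy (moveToTop_self_rank e y) (Ne.symm hyz)
  have hdirOx : DirAbove Ox x y := by
    show (Ox x : ℕ) = (Ox y : ℕ) + 1
    rw [hOxx, hOxy]
    omega
  have hdirOz : DirAbove Oz z y := by
    show (Oz z : ℕ) = (Oz y : ℕ) + 1
    rw [hOzz, hOzy]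
    omega
  -- the profile
  set Pstar : Fin n → Pref C :=
    fun i => if (i : ℕ) < a then Ox else if (i : ℕ) < a + b then Oy else Oz with hPstar
  set G1 : Finset (Fin n) := univ.filter (fun i => (i : ℕ) < a) with hG1def
  set G2 : Finset (Fin n) := univ.filter (fun i => a ≤ (i : ℕ) ∧ (i : ℕ) < a + b) with hG2def
  set G3 : Finset (Fin n) := univ.filter (fun i => a + b ≤ (i : ℕ)) with hG3def
  have hmemG1 : ∀ i : Fin n, i ∈ G1 ↔ (i : ℕ) < a := by
    intro i; rw [hG1def]; simp
  have hmemG2 : ∀ i : Fin n, i ∈ G2 ↔ a ≤ (i : ℕ) ∧ (i : ℕ) < a + b := by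
    intro i; rw [hG2def]; simp
  have hmemG3 : ∀ i : Fin n, i ∈ G3 ↔ a + b ≤ (i : ℕ) := by
    intro i; rw [hG3def]; simp
  have hPG1 : ∀ i ∈ G1, Pstar i = Ox := by
    intro i hi
    rw [hPstar]
    simp only [if_pos ((hmemG1 i).mp hi)]
  have hPG2 : ∀ i ∈ G2, Pstar i = Oy := by
    intro i hi
    obtain ⟨h1, h2⟩ := (hmemG2 i).mp hi
    rw [hPstar]
    simp only
    rw [if_neg (by omega), if_pos h2]
  have hPG3 : ∀ i ∈ G3, Pstar i = Oz := by
    intro i hi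
    have h1 := (hmemG3 i).mp hi
    rw [hPstar]
    simp only
    rw [if_neg (by omega), if_neg (by omega)]
  -- estimate for x
  have hex : |v Pstar x - vTopCount v e x a| ≤ 2 * (m : ℝ) * ε := by
    apply twostep_estimate hm hv han hpr hpi hsu hε e Pstar Oy Oz G2 G3
    · intro i hi2 hi3
      rw [hmemG2] at hi2
      rw [hmemG3] at hi3
      omega
    · exact hPG2
    · exact hPG3
    · rw [htopOy]; exact Ne.symm hxy
    · rw [htopOz]; exact Ne.symm hxz
    · intro i h2 h3
      rw [hmemG2] at h2
      rw [hmemG3] at h3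
      have hia : (i : ℕ) < a := by omega
      have := hPG1 i ((hmemG1 i).mpr hia)
      rw [this, htopOx]
    · omega
    · have : (univ.filter fun i : Fin n => i ∉ G2 ∧ i ∉ G3) =
          (univ.filter fun i : Fin n => 0 ≤ (i : ℕ) ∧ (i : ℕ) < a) := by
        apply Finset.filter_congr
        intro i _
        rw [hmemG2, hmemG3]
        constructor
        · intro ⟨u1, u2⟩
          constructor
          · omega
          · by_contra hh
            push_neg at hh
            rcases Nat.lt_or_ge (i : ℕ) (a + b) with hcase | hcase
            · exact u1 ⟨hh, hcase⟩
            · exact u2 hcase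
        · intro ⟨_, u⟩
          exact ⟨fun hh => by omega, by omega⟩
      rw [this, card_filter_Ico (by omega : a ≤ n)]
      omega
  -- estimate for y
  have hey : |v Pstar y - vTopCount v e y b| ≤ 2 * (m : ℝ) * ε := by
    apply twostep_estimate hm hv han hpr hpi hsu hε e Pstar Ox Oz G1 G3
    · intro i hi1 hi3
      rw [hmemG1] at hi1
      rw [hmemG3] at hi3
      omega
    · exact hPG1
    · exact hPG3
    · rw [htopOx]; exact hxy
    · rw [htopOz]; exact Ne.symm hyz
    · intro i h1 h3
      rw [hmemG1] at h1
      rw [hmemG3] at h3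
      have hib : a ≤ (i : ℕ) ∧ (i : ℕ) < a + b := by omega
      have := hPG2 i ((hmemG2 i).mpr hib)
      rw [this, htopOy]
    · omega
    · have : (univ.filter fun i : Fin n => i ∉ G1 ∧ i ∉ G3) =
          (univ.filter fun i : Fin n => a ≤ (i : ℕ) ∧ (i : ℕ) < a + b) := by
        apply Finset.filter_congr
        intro i _
        rw [hmemG1, hmemG3]
        constructor
        · intro ⟨u1, u2⟩
          omega
        · intro ⟨u1, u2⟩
          omega
      rw [this, card_filter_Ico hab]
      omega
  -- estimate for z
  have hez : |v Pstar z - vTopCount v e z (n - a - b)| ≤ 2 * (m : ℝ) * ε := by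
    apply twostep_estimate hm hv han hpr hpi hsu hε e Pstar Ox Oy G1 G2
    · intro i hi1 hi2
      rw [hmemG1] at hi1
      rw [hmemG2] at hi2
      omega
    · exact hPG1
    · exact hPG2
    · rw [htopOx]; exact hxz
    · rw [htopOy]; exact hyz
    · intro i h1 h2
      rw [hmemG1] at h1
      rw [hmemG2] at h2
      have hic : a + b ≤ (i : ℕ) := by omega
      have := hPG3 i ((hmemG3 i).mpr hic)
      rw [this, htopOz]
    · omega
    · have : (univ.filter fun i : Fin n => i ∉ G1 ∧ i ∉ G2) =
          (univ.filter fun i : Fin n => a + b ≤ (i : ℕ) ∧ (i : ℕ) < n) := by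
        apply Finset.filter_congr
        intro i _
        rw [hmemG1, hmemG2]
        have := i.isLt
        constructor
        · intro ⟨u1, u2⟩
          omega
        · intro ⟨u1, u2⟩
          omega
      rw [this, card_filter_Ico (le_refl n)]
      omega
  -- the remaining candidates
  have hrest : ∀ w, w ≠ x → w ≠ y → w ≠ z → v Pstar w ≤ ε := by
    intro w hwx hwy hwz
    have hstep1 := batch_resp hpr hdirOx G1 Pstar hPG1 w hwx hwy
    set P2' : Fin n → Pref C := fun i => if i ∈ G1 then swapIn Ox x y else Pstar i with hP2'
    have hP2'G3 : ∀ i ∈ G3, P2' i = Oz := by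
      intro i hi
      have h1 := (hmemG3 i).mp hi
      have hni : i ∉ G1 := by rw [hmemG1]; omega
      rw [hP2']
      simp only [if_neg hni]
      exact hPG3 i hi
    have hstep2 := batch_resp hpr hdirOz G3 P2' hP2'G3 w hwz hwy
    set P3' : Fin n → Pref C := fun i => if i ∈ G3 then swapIn Oz z y else P2' i with hP3'
    have htops : ∀ i, topC (P3' i) = y := by
      intro i
      rw [hP3']
      by_cases h3 : i ∈ G3
      · simp only [if_pos h3]
        apply topC_of_rank_last
        rw [swapIn_rank_right, hOzz]
      · simp only [if_neg h3]
        rw [hP2']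
        by_cases h1 : i ∈ G1
        · simp only [if_pos h1]
          apply topC_of_rank_last
          rw [swapIn_rank_right, hOxx]
        · simp only [if_neg h1]
          rw [hmemG1] at h1
          rw [hmemG3] at h3
          have := hPG2 i ((hmemG2 i).mpr (by omega))
          rw [this]
          exact htopOy
    have hbound : v P3' w ≤ ε := v_le_eps_of_unanimous hv hsu htops hwy
    rw [← hstep1, ← hstep2]
    exact hbound
  -- summing up
  have hsum := hv.2 Pstar
  have hxyz_sum : ∑ c ∈ ({x, y, z} : Finset C), v Pstar c
      = v Pstar x + v Pstar y + v Pstar z := by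
    rw [Finset.sum_insert (by simp [hxy, hxz]), Finset.sum_pair hyz]
    ring
  have hsplit : ∑ c ∈ (univ : Finset C) \ {x, y, z}, v Pstar c
      + (v Pstar x + v Pstar y + v Pstar z) = 1 := by
    have h0 := Finset.sum_sdiff (f := v Pstar) (Finset.subset_univ ({x, y, z} : Finset C))
    rw [hxyz_sum, hsum] at h0
    exact h0
  have hc3 : ({x, y, z} : Finset C).card = 3 := by
    rw [Finset.card_insert_of_notMem (by simp [hxy, hxz]), Finset.card_pair hyz]
  have hcard_rest : ((univ : Finset C) \ {x, y, z}).card = m - 3 := by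
    rw [Finset.card_sdiff_of_subset (Finset.subset_univ _), Finset.card_univ, hc3]
  have hrest_ub : ∑ c ∈ (univ : Finset C) \ {x, y, z}, v Pstar c ≤ ((m - 3 : ℕ) : ℝ) * ε := by
    have := Finset.sum_le_card_nsmul ((univ : Finset C) \ {x, y, z}) (v Pstar) ε ?_
    · rw [hcard_rest] at this
      rwa [nsmul_eq_mul] at this
    · intro c hc
      simp only [Finset.mem_sdiff, Finset.mem_univ, Finset.mem_insert,
        Finset.mem_singleton, true_and] at hc
      push_neg at hc
      exact hrest c hc.1 hc.2.1 hc.2.2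
  have hrest_lb : 0 ≤ ∑ c ∈ (univ : Finset C) \ {x, y, z}, v Pstar c :=
    Finset.sum_nonneg (fun c _ => hv.1 Pstar c)
  have hm3 : ((m - 3 : ℕ) : ℝ) ≤ (m : ℝ) := by
    exact_mod_cast Nat.sub_le m 3
  have hrest_ub' : ∑ c ∈ (univ : Finset C) \ {x, y, z}, v Pstar c ≤ (m : ℝ) * ε :=
    le_trans hrest_ub (mul_le_mul_of_nonneg_right hm3 hε)
  -- final computation
  rw [abs_le] at hex hey hez ⊢
  obtain ⟨hex1, hex2⟩ := hex
  obtain ⟨hey1, hey2⟩ := hey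
  obtain ⟨hez1, hez2⟩ := hez
  have hmm : (0 : ℝ) ≤ (m : ℝ) * ε := by positivity
  constructor
  · linarith
  · linarith

end Voting3

-- PLACEHOLDER_FINAL

/-- Near-linearity of the top-count function. -/
theorem near_linearity_of_top_count [Fintype C] [Nonempty C] [DecidableEq C] {n : ℕ}
    (hm : 3 ≤ Fintype.card C) (v : (Fin n → Pref C) → C → ℝ)
    (hv : IsVotingRule v) (han : Anonymous v) (hpr : PairwiseResponsive v)
    (hpi : PairwiseIsolated v) (ε : ℝ) (hsu : StrongUnanimity ε v)
    (e : Pref C) (x : C) (j j' ℓ : ℕ) (hj : j ≤ n - 1) (hj' : j' ≤ n - 1)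
    (hℓ : 1 ≤ ℓ) (hjℓ : j + ℓ ≤ n) (hj'ℓ : j' + ℓ ≤ n) :
    |(vTopCount v e x (j + ℓ) - vTopCount v e x j) -
        (vTopCount v e x (j' + ℓ) - vTopCount v e x j')| ≤
      64 * (Fintype.card C : ℝ) * ε := by
  classical
  have hε : 0 ≤ ε := eps_nonneg hv hsu
  -- pick two other candidates
  obtain ⟨y, hy, z, hz, hyz⟩ : ∃ y, y ≠ x ∧ ∃ z, z ≠ x ∧ y ≠ z := by
    have hcard : 1 < (univ.erase x : Finset C).card := by
      rw [Finset.card_erase_of_mem (mem_univ x), Finset.card_univ]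
      omega
    obtain ⟨y, hy, z, hz, hyz⟩ := Finset.one_lt_card.mp hcard
    exact ⟨y, Finset.ne_of_mem_erase hy, z, Finset.ne_of_mem_erase hz, hyz⟩
  have hxy : x ≠ y := Ne.symm hy
  have hxz : x ≠ z := Ne.symm hz
  have E1 := clubsuit hm hv han hpr hpi hsu hε e hxy hxz hyz j ℓ hjℓ
  have E2 := clubsuit hm hv han hpr hpi hsu hε e hxy hxz hyz (j + ℓ) 0 (by omega)
  have E3 := clubsuit hm hv han hpr hpi hsu hε e hxy hxz hyz j' ℓ hj'ℓ
  have E4 := clubsuit hm hv han hpr hpi hsu hε e hxy hxz hyz (j' + ℓ) 0 (by omega)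
  have hz2 : n - (j + ℓ) - 0 = n - j - ℓ := by omega
  have hz4 : n - (j' + ℓ) - 0 = n - j' - ℓ := by omega
  rw [hz2] at E2
  rw [hz4] at E4
  have hmmε : (0 : ℝ) ≤ (Fintype.card C : ℝ) * ε := by positivity
  rw [abs_le] at E1 E2 E3 E4 ⊢
  obtain ⟨e11, e12⟩ := E1
  obtain ⟨e21, e22⟩ := E2
  obtain ⟨e31, e32⟩ := E3
  obtain ⟨e41, e42⟩ := E4
  constructor
  · linarith
  · linarith
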